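/- Let n be a positive integer, let f ∈ C[0,1] and let p = P_{𝒫ₙ}(f). Let γ be a continuous linear functional on C[0,1] with ⟨γ, f − p⟩ < 0. Then for every continuous linear functional μ on C[0,1], γ ∉ D̂*P_{𝒫ₙ}(f, p)(μ). -/

import Mathlib

/-- `𝒫ₙ`: the subspace of `C[0,1]` consisting of (restrictions to `[0,1]` of) real
polynomials of degree at most `n`. -/
def polySet (n : ℕ) : Set C(Set.Icc (0 : ℝ) 1, ℝ) :=
  {p | ∃ q : Polynomial ℝ, q.degree ≤ n ∧ ∀ t : Set.Icc (0 : ℝ) 1, p t = q.eval (t : ℝ)}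

open Set in
lemma norm_attained (h : C(Set.Icc (0:ℝ) 1, ℝ)) : ∃ x, |h x| = ‖h‖ := by
  obtain ⟨x, -, hx⟩ := isCompact_univ.exists_isMaxOn (Set.univ_nonempty)
    ((map_continuous h).abs.continuousOn)
  refine ⟨x, le_antisymm (h.norm_coe_le_norm x) ?_⟩
  exact (ContinuousMap.norm_le _ (abs_nonneg _)).mpr fun y => hx (Set.mem_univ y)

lemma polySet_comb {n : ℕ} (a b : ℝ) {p q : C(Set.Icc (0:ℝ) 1, ℝ)}
    (hp : p ∈ polySet n) (hq : q ∈ polySet n) : a • p + b • q ∈ polySet n := by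
  obtain ⟨qp, hqp, hep⟩ := hp
  obtain ⟨qq, hqq, heq⟩ := hq
  refine ⟨Polynomial.C a * qp + Polynomial.C b * qq, ?_, fun t => ?_⟩
  · refine (Polynomial.degree_add_le _ _).trans (max_le ?_ ?_)
    · calc Polynomial.degree (Polynomial.C a * qp) ≤ 0 + Polynomial.degree qp :=
        (Polynomial.degree_mul_le _ _).trans (add_le_add Polynomial.degree_C_le le_rfl)
      _ ≤ n := by rw [zero_add]; exact hqp
    · calc Polynomial.degree (Polynomial.C b * qq) ≤ 0 + Polynomial.degree qq :=
        (Polynomial.degree_mul_le _ _).trans (add_le_add Polynomial.degree_C_le le_rfl)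
      _ ≤ n := by rw [zero_add]; exact hqq
  · simp [hep t, heq t]

set_option maxHeartbeats 1000000 in
lemma best_unique {n : ℕ} (h p₁ p₂ : C(Set.Icc (0:ℝ) 1, ℝ))
    (h₁ : p₁ ∈ polySet n) (h₂ : p₂ ∈ polySet n)
    (b₁ : ∀ q ∈ polySet n, ‖h - p₁‖ ≤ ‖h - q‖)
    (b₂ : ∀ q ∈ polySet n, ‖h - p₂‖ ≤ ‖h - q‖) : p₁ = p₂ := by
  set R := ‖h - p₁‖ with hRdef
  have hR2 : ‖h - p₂‖ = R := le_antisymm (b₂ _ h₁) (b₁ _ h₂)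
  by_cases hR0 : R = 0
  · have e1 : h = p₁ := sub_eq_zero.mp (norm_eq_zero.mp hR0)
    have e2 : h = p₂ := sub_eq_zero.mp (norm_eq_zero.mp (hR2.trans hR0))
    exact e1 ▸ e2
  have hRpos : 0 < R := lt_of_le_of_ne (norm_nonneg _) (Ne.symm hR0)
  set p : C(Set.Icc (0:ℝ) 1, ℝ) := (1/2 : ℝ) • p₁ + (1/2 : ℝ) • p₂ with hpdef
  have hpmem : p ∈ polySet n := polySet_comb _ _ h₁ h₂
  set e := h - p with hedef
  have heR : ‖e‖ = R := by
    refine le_antisymm ?_ (b₁ _ hpmem)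
    have hrep : e = (1/2 : ℝ) • (h - p₁) + (1/2 : ℝ) • (h - p₂) := by
      rw [hedef, hpdef]; module
    calc ‖e‖ ≤ ‖(1/2:ℝ) • (h - p₁)‖ + ‖(1/2:ℝ) • (h - p₂)‖ := by rw [hrep]; exact norm_add_le _ _
      _ = R := by
          have n1 := norm_smul (1/2 : ℝ) (h - p₁)
          have n2 := norm_smul (1/2 : ℝ) (h - p₂)
          rw [n1, n2, hR2, ← hRdef, Real.norm_eq_abs,
            abs_of_nonneg (by norm_num : (0:ℝ) ≤ 1/2)]
          ring
  have hkey : ∀ x, |e x| = R → p₁ x = p₂ x ∧ e x = h x - p₁ x := by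
    intro x hx
    have ha : |h x - p₁ x| ≤ R := by
      simpa [Real.norm_eq_abs] using (h - p₁).norm_coe_le_norm x
    have hb : |h x - p₂ x| ≤ R := by
      have := (h - p₂).norm_coe_le_norm x
      rw [hR2] at this
      simpa [Real.norm_eq_abs] using this
    have hex : e x = ((h x - p₁ x) + (h x - p₂ x))/2 := by
      simp [hedef, hpdef]; ring
    rw [hex] at hx
    rcases abs_le.mp ha with ⟨ha1, ha2⟩
    rcases abs_le.mp hb with ⟨hb1, hb2⟩
    rcases (abs_eq hRpos.le).mp hx with h' | h' <;>
      exact ⟨by linarith, by rw [hex]; linarith⟩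
  set E := {x : ↥(Set.Icc (0:ℝ) 1) | |e x| = R} with hEdef
  by_cases hbig : ∃ s : Finset ↥(Set.Icc (0:ℝ) 1), ↑s ⊆ E ∧ s.card = n + 1
  · obtain ⟨s, hsE, hscard⟩ := hbig
    obtain ⟨q₁, hq₁, he₁⟩ := h₁
    obtain ⟨q₂, hq₂, he₂⟩ := h₂
    have hq : q₁ - q₂ = 0 := by
      apply Polynomial.eq_zero_of_natDegree_lt_card_of_eval_eq_zero' _ (s.image (Subtype.val))
      · intro i hi
        obtain ⟨x, hxs, rfl⟩ := Finset.mem_image.mp hi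
        have hx := (hkey x (hsE hxs)).1
        rw [Polynomial.eval_sub, ← he₁ x, ← he₂ x, hx, sub_self]
      · rw [Finset.card_image_of_injective _ Subtype.val_injective, hscard]
        have hdeg : (q₁ - q₂).degree ≤ (n : WithBot ℕ) :=
          (Polynomial.degree_sub_le _ _).trans (max_le hq₁ hq₂)
        exact Nat.lt_succ_of_le (Polynomial.natDegree_le_iff_degree_le.mpr hdeg)
    have hq12 : q₁ = q₂ := sub_eq_zero.mp hq
    ext x
    rw [he₁ x, he₂ x, hq12]
  · exfalso
    have hEfin : E.Finite := by
      by_contra hinf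
      obtain ⟨s, hs, hc⟩ := Set.Infinite.exists_subset_card_eq hinf (n+1)
      exact hbig ⟨s, hs, hc⟩
    set s := hEfin.toFinset with hsdef
    have hscoe : ↑s = E := hEfin.coe_toFinset
    have hscard : s.card ≤ n := by
      by_contra hgt
      push_neg at hgt
      obtain ⟨t, hts, htc⟩ := Finset.exists_subset_card_eq hgt
      exact hbig ⟨t, (Finset.coe_subset.mpr hts).trans hscoe.subset, htc⟩
    obtain ⟨x₀, hx₀⟩ := norm_attained e
    rw [heR] at hx₀
    have hx₀E : x₀ ∈ E := hx₀
    set F := Lagrange.interpolate s (fun x : ↥(Set.Icc (0:ℝ) 1) => (x:ℝ)) (fun x => e x)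
      with hFdef
    have hinj : Set.InjOn (fun x : ↥(Set.Icc (0:ℝ) 1) => (x:ℝ)) ↑s :=
      Subtype.val_injective.injOn
    have hFdeg : F.degree ≤ (n : WithBot ℕ) := by
      have h1 := Lagrange.degree_interpolate_lt (fun x => e x) hinj
      have h2 : (s.card : WithBot ℕ) ≤ (n : WithBot ℕ) := by exact_mod_cast hscard
      exact le_of_lt (lt_of_lt_of_le h1 h2)
    set vC : C(Set.Icc (0:ℝ) 1, ℝ) :=
      ⟨fun x => F.eval (x:ℝ), F.continuous.comp continuous_subtype_val⟩ with hvCdef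
    have hvmem : vC ∈ polySet n := ⟨F, hFdeg, fun t => rfl⟩
    have hvnode : ∀ x ∈ E, vC x = e x := by
      intro x hx
      have hxs : x ∈ s := hEfin.mem_toFinset.mpr hx
      exact Lagrange.eval_interpolate_at_node (fun x => e x) hinj hxs
    set M := ‖vC‖ with hMdef
    have hM : 0 < M := by
      have h1 : |vC x₀| = R := by rw [hvnode x₀ hx₀E]; exact hx₀E
      have h2 : |vC x₀| ≤ M := by
        simpa [Real.norm_eq_abs] using vC.norm_coe_le_norm x₀
      linarith
    obtain ⟨R', hR'0, hR'R, hR'bd⟩ :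
        ∃ R', 0 ≤ R' ∧ R' < R ∧ ∀ x, ¬ (R^2/2 < e x * vC x) → |e x| ≤ R' := by
      set K := {x : ↥(Set.Icc (0:ℝ) 1) | ¬ (R^2/2 < e x * vC x)} with hKdef
      have hKclosed : IsClosed K := by
        have hKeq : K = (fun x => e x * vC x) ⁻¹' (Set.Iic (R^2/2)) := by
          ext x; simp [hKdef, not_lt]
        rw [hKeq]
        exact IsClosed.preimage ((map_continuous e).mul (map_continuous vC)) isClosed_Iic
      rcases K.eq_empty_or_nonempty with hK | hK
      · refine ⟨0, le_refl _, hRpos, fun x hx => absurd ?_ (Set.notMem_empty x)⟩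
        rw [← hK]; exact hx
      · obtain ⟨x₁, hx₁K, hx₁max⟩ :=
          hKclosed.isCompact.exists_isMaxOn hK (map_continuous e).abs.continuousOn
        refine ⟨|e x₁|, abs_nonneg _, ?_, fun x hx => hx₁max hx⟩
        have hle : |e x₁| ≤ R := by
          simpa [Real.norm_eq_abs, heR] using e.norm_coe_le_norm x₁
        rcases lt_or_eq_of_le hle with hlt | heq
        · exact hlt
        · exfalso
          have hx₁E : x₁ ∈ E := heq
          have := hvnode x₁ hx₁E
          apply hx₁K
          rw [this]
          have : (e x₁)^2 = R^2 := by
            rw [← sq_abs, heq]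
          rw [← sq] at *
          nlinarith [hRpos]
    set t := min ((R - R') / (2*M)) (R^2/(2*M^2)) with htdef
    have hRR' : 0 < R - R' := sub_pos.mpr hR'R
    have ht0 : 0 < t := lt_min (by positivity) (by positivity)
    have htM : t * M ≤ (R - R')/2 := by
      have h1 : t ≤ (R - R')/(2*M) := min_le_left _ _
      have := mul_le_mul_of_nonneg_right h1 hM.le
      calc t * M ≤ ((R - R')/(2*M)) * M := this
        _ = (R - R')/2 := by field_simp
    have htM2 : t * M^2 ≤ R^2/2 := by
      have h1 : t ≤ R^2/(2*M^2) := min_le_right _ _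
      have := mul_le_mul_of_nonneg_right h1 (sq_nonneg M)
      calc t * M^2 ≤ (R^2/(2*M^2)) * M^2 := this
        _ = R^2/2 := by field_simp
    set c := max (Real.sqrt (R^2 - t*R^2 + t^2*M^2)) (R' + t*M) with hcdef
    have hcR : c < R := by
      refine max_lt ?_ ?_
      · refine (Real.sqrt_lt' hRpos).mpr ?_
        nlinarith [mul_le_mul_of_nonneg_left htM2 ht0.le, mul_pos ht0 (by positivity : (0:ℝ) < R^2)]
      · linarith
    have hc0 : 0 ≤ c := le_max_of_le_right (by positivity)
    have hb : ∀ x, ‖(e - t • vC) x‖ ≤ c := by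
      intro x
      have hval : (e - t • vC) x = e x - t * vC x := by simp
      rw [hval, Real.norm_eq_abs]
      have hex : |e x| ≤ R := by
        simpa [Real.norm_eq_abs, heR] using e.norm_coe_le_norm x
      have hvx : |vC x| ≤ M := by
        simpa [Real.norm_eq_abs] using vC.norm_coe_le_norm x
      rcases abs_le.mp hex with ⟨hex1, hex2⟩
      rcases abs_le.mp hvx with ⟨hvx1, hvx2⟩
      by_cases hx : R^2/2 < e x * vC x
      · refine le_trans ?_ (le_max_left _ _)
        rw [← Real.sqrt_sq_eq_abs]
        apply Real.sqrt_le_sqrt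
        nlinarith [mul_le_mul_of_nonneg_left hx.le ht0.le, sq_nonneg t, sq_nonneg (e x),
          sq_nonneg (vC x), mul_le_mul_of_nonneg_left (sq_le_sq' hvx1 hvx2) (sq_nonneg t)]
      · refine le_trans ?_ (le_max_right _ _)
        calc |e x - t * vC x| ≤ |e x| + |t * vC x| := abs_sub _ _
          _ ≤ R' + t * M := by
              rw [abs_mul, abs_of_pos ht0]
              exact add_le_add (hR'bd x hx) (mul_le_mul_of_nonneg_left hvx ht0.le)
    have hnormle : ‖e - t • vC‖ ≤ c := (ContinuousMap.norm_le _ hc0).mpr hb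
    have hcon : R ≤ ‖e - t • vC‖ := by
      have hmem : p + t • vC ∈ polySet n := by
        have := polySet_comb 1 t hpmem hvmem
        simpa using this
      have hb' := b₁ _ hmem
      have heq2 : h - (p + t • vC) = e - t • vC := by rw [hedef]; abel
      rwa [heq2] at hb'
    linarith

/-- `γ` belongs to the Mordukhovich (Fréchet) coderivative `D̂*P(f, P f)(μ)` of the
single-valued mapping `P` on `C[0,1]` at `f`, evaluated at `μ`: the ε-δ form of
`limsup_{g→f} (⟨γ, g − f⟩ − ⟨μ, P(g) − P(f)⟩)/(‖g − f‖ + ‖P(g) − P(f)‖) ≤ 0`. -/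
def inCoderivP (P : C(Set.Icc (0 : ℝ) 1, ℝ) → C(Set.Icc (0 : ℝ) 1, ℝ))
    (f : C(Set.Icc (0 : ℝ) 1, ℝ)) (γ μ : C(Set.Icc (0 : ℝ) 1, ℝ) →L[ℝ] ℝ) : Prop :=
  ∀ ε > (0 : ℝ), ∃ δ > (0 : ℝ), ∀ g : C(Set.Icc (0 : ℝ) 1, ℝ), ‖g - f‖ < δ →
    γ (g - f) - μ (P g - P f) ≤ ε * (‖g - f‖ + ‖P g - P f‖)

/-- Theorem 5.10 (iii). Let `n` be a positive integer, `f ∈ C[0,1]`,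
`p = P_{𝒫ₙ}(f)` its (unique) best approximation from `𝒫ₙ`, and let `γ` be a continuous
linear functional on `C[0,1]` with `⟨γ, f − p⟩ < 0`. Then for every continuous linear
functional `μ` on `C[0,1]`, `γ ∉ D̂*P_{𝒫ₙ}(f, p)(μ)`. -/
theorem stmt_18 (n : ℕ) (hn : 0 < n)
    (P : C(Set.Icc (0 : ℝ) 1, ℝ) → C(Set.Icc (0 : ℝ) 1, ℝ))
    (hP : ∀ g, P g ∈ polySet n ∧ ∀ q ∈ polySet n, ‖g - P g‖ ≤ ‖g - q‖)
    (f : C(Set.Icc (0 : ℝ) 1, ℝ))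
    (γ : C(Set.Icc (0 : ℝ) 1, ℝ) →L[ℝ] ℝ) (hγ : γ (f - P f) < 0) :
    ∀ μ : C(Set.Icc (0 : ℝ) 1, ℝ) →L[ℝ] ℝ, ¬ inCoderivP P f γ μ := by
  intro μ hco
  set p := P f with hpdef
  set e0 := f - p with he0def
  set R0 := ‖e0‖ with hR0def
  have hR0pos : 0 < R0 := by
    rcases eq_or_lt_of_le (norm_nonneg e0) with h0 | h0
    · exfalso
      have : e0 = 0 := norm_eq_zero.mp h0.symm
      rw [this] at hγ
      simp at hγ
    · exact h0
  set c := -γ e0 with hcdef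
  have hcpos : 0 < c := by rw [hcdef]; linarith
  obtain ⟨δ, hδ, hineq⟩ := hco (c/(2*R0)) (by positivity)
  set s := min (δ/(2*R0)) (1/2 : ℝ) with hsdef
  have hs0 : 0 < s := lt_min (by positivity) (by norm_num)
  have hs1 : s < 1 := lt_of_le_of_lt (min_le_right _ _) (by norm_num)
  set g := f - s • e0 with hgdef
  have hgf : g - f = -(s • e0) := by rw [hgdef]; abel
  have hgfnorm : ‖g - f‖ = s * R0 := by
    have hns := norm_smul s e0
    rw [hgf, norm_neg, hns, Real.norm_eq_abs, abs_of_pos hs0, hR0def]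
  have hlt : ‖g - f‖ < δ := by
    rw [hgfnorm]
    have h1 : s ≤ δ/(2*R0) := min_le_left _ _
    have h2 : s * R0 ≤ (δ/(2*R0)) * R0 := mul_le_mul_of_nonneg_right h1 hR0pos.le
    have h3 : (δ/(2*R0)) * R0 = δ/2 := by field_simp
    linarith
  have hgp : g - p = (1 - s) • e0 := by
    rw [hgdef, he0def]; module
  have hbest : ∀ q ∈ polySet n, ‖g - p‖ ≤ ‖g - q‖ := by
    intro q hq
    set q' : C(Set.Icc (0:ℝ) 1, ℝ) := (1-s)⁻¹ • q + (-((1-s)⁻¹ * s)) • p with hq'def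
    have hq'mem : q' ∈ polySet n := polySet_comb _ _ hq (hP f).1
    have hid : g - q = (1 - s) • (f - q') := by
      have hs1' : (1 - s) ≠ 0 := by intro h0; rw [sub_eq_zero] at h0; exact absurd h0.symm hs1.ne
      rw [hgdef, hq'def, he0def]
      ext x
      simp [ContinuousMap.sub_apply, ContinuousMap.add_apply, ContinuousMap.smul_apply,
        smul_eq_mul]
      field_simp
      ring
    have h1 : ‖g - p‖ = (1 - s) * R0 := by
      have hns := norm_smul (1 - s) e0
      rw [hgp, hns, Real.norm_eq_abs, abs_of_pos (by linarith), hR0def]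
    have h2 : ‖g - q‖ = (1 - s) * ‖f - q'‖ := by
      have hns := norm_smul (1 - s) (f - q')
      rw [hid, hns, Real.norm_eq_abs, abs_of_pos (by linarith)]
    rw [h1, h2]
    have h3 : R0 ≤ ‖f - q'‖ := (hP f).2 q' hq'mem
    nlinarith
  have hPg : P g = p := best_unique g (P g) p (hP g).1 (hP f).1 (hP g).2 hbest
  have hz : P g - P f = 0 := by rw [hPg, hpdef, sub_self]
  have hγg : γ (g - f) = s * c := by
    rw [hgf, map_neg, map_smul, smul_eq_mul, hcdef]; ring
  have hfin := hineq g hlt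
  rw [hz, hγg, hgfnorm] at hfin
  simp only [map_zero, norm_zero, sub_zero, add_zero] at hfin
  have heq : c/(2*R0) * (s * R0) = s * c / 2 := by field_simp
  rw [heq] at hfin
  nlinarith [mul_pos hs0 hcpos]
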